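/- For each n ≥ 1, define complex coordinates z_1,...,z_n with Poisson brackets {z_k,z_ℓ} = z_k z_ℓ for k ≤ ℓ, {z_k,z_ℓ*} = z_k z_ℓ* for k ≠ ℓ, and {z_k,z_k*} = 2(1 + Σ_{ℓ≤k} z_ℓ z_ℓ*). Let S^{(n)} be the 2n×2n antisymmetric matrix with entries S_{ij} = {w_i,w_j} where w_{2k-1} = z_k, w_{2k} = z_k*. Then the Pfaffian satisfies the recursion Pf(S^{(n)}) = 2·Pf(S^{(n-1)})·(1 + Σ_{ℓ≤n} |z_ℓ|²), and hence Pf(S^{(n)}) = 2^n · Π_{k=1}^n (1 + Σ_{ℓ≤k} |z_ℓ|²) ≠ 0. -/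

import Mathlib

open Finset

/-- The Pfaffian of a `2n × 2n` matrix, via the standard closed formula
`Pf(A) = (2^n n!)⁻¹ ∑_{σ ∈ S_{2n}} sgn σ ∏_k A_{σ(2k) σ(2k+1)}`. -/
noncomputable def pfaffian (n : ℕ) (A : Matrix (Fin (2 * n)) (Fin (2 * n)) ℂ) : ℂ :=
  ((2 : ℂ) ^ n * (n.factorial : ℂ))⁻¹ *
    ∑ σ : Equiv.Perm (Fin (2 * n)),
      ((Equiv.Perm.sign σ : ℤ) : ℂ) *
        ∏ k : Fin n,
          A (σ ⟨2 * k, by have := k.isLt; omega⟩) (σ ⟨2 * k + 1, by have := k.isLt; omega⟩)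

/-- `w` is the interleaved coordinate list: `w_{2k} = z_k`, `w_{2k+1} = z_k*` (0-indexed). -/
noncomputable def wCoord (z : ℕ → ℂ) (i : ℕ) : ℂ :=
  if i % 2 = 0 then z (i / 2) else starRingEnd ℂ (z (i / 2))

/-- The Poisson bracket `{w_i, w_j}` for `i < j`:
if `w_i, w_j` come from the same `z_k` it is `{z_k, z_k*} = 2(1 + ∑_{ℓ≤k} z_ℓ z_ℓ*)`;
otherwise (indices `a < b`) all brackets `{z_a, z_b}, {z_a, z_b*}, {z_a*, z_b}, {z_a*, z_b*}`
equal the product `w_i w_j`. -/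
noncomputable def wBracket (z : ℕ → ℂ) (i j : ℕ) : ℂ :=
  if i / 2 = j / 2 then
    2 * (1 + ∑ ℓ ∈ Finset.range (i / 2 + 1), z ℓ * starRingEnd ℂ (z ℓ))
  else wCoord z i * wCoord z j

/-- The antisymmetric matrix `S^{(n)}` with `S_{ij} = {w_i, w_j}`. -/
noncomputable def Spn (n : ℕ) (z : ℕ → ℂ) : Matrix (Fin (2 * n)) (Fin (2 * n)) ℂ :=
  fun i j =>
    if (i : ℕ) < (j : ℕ) then wBracket z i j
    else if (j : ℕ) < (i : ℕ) then - wBracket z j i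
    else 0

namespace PfSphere

lemma perm_apply_inv_self {α : Type*} (σ : Equiv.Perm α) (x : α) : σ (σ⁻¹ x) = x :=
  Equiv.apply_symm_apply σ x

lemma perm_inv_apply_self {α : Type*} (σ : Equiv.Perm α) (x : α) : σ⁻¹ (σ x) = x :=
  Equiv.symm_apply_apply σ x

variable {n : ℕ}

def P0 (k : Fin n) : Fin (2*n) := ⟨2*k, by have := k.isLt; omega⟩
def P1 (k : Fin n) : Fin (2*n) := ⟨2*k+1, by have := k.isLt; omega⟩

lemma P0_ne_P1 (k : Fin n) : P0 k ≠ P1 k := by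
  simp [P0, P1, Fin.ext_iff]

def flipPerm (n : ℕ) : Equiv.Perm (Fin (2*n)) :=
  Function.Involutive.toPerm
    (fun x => ⟨if (x:ℕ) % 2 = 0 then (x:ℕ)+1 else (x:ℕ)-1, by
      have := x.isLt; split_ifs with h <;> omega⟩)
    (by
      intro x
      ext
      simp only
      split_ifs <;> omega)

lemma flip_val (x : Fin (2*n)) :
    ((flipPerm n x : Fin (2*n)) : ℕ) = if (x:ℕ) % 2 = 0 then (x:ℕ)+1 else (x:ℕ)-1 := rfl

lemma flip_div (x : Fin (2*n)) : ((flipPerm n x : Fin (2*n)) : ℕ)/2 = (x:ℕ)/2 := by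
  rw [flip_val]; split_ifs <;> omega

lemma flip_ne (x : Fin (2*n)) : flipPerm n x ≠ x := by
  intro h
  have := congrArg Fin.val h
  rw [flip_val] at this
  split_ifs at this <;> omega

lemma flip_flip (x : Fin (2*n)) : flipPerm n (flipPerm n x) = x := by
  ext
  simp only [flip_val]
  split_ifs with h1 h2 <;> omega

lemma flip_P0 (k : Fin n) : flipPerm n (P0 k) = P1 k := by
  ext; rw [flip_val]; simp [P0, P1]

lemma flip_P1 (k : Fin n) : flipPerm n (P1 k) = P0 k := by
  ext; rw [flip_val]; simp [P0, P1]

lemma block_mem (a b : Fin (2*n)) (h : (a:ℕ)/2 = (b:ℕ)/2) :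
    b = a ∨ b = flipPerm n a := by
  rcases Nat.mod_two_eq_zero_or_one (b:ℕ) with hb | hb <;>
  rcases Nat.mod_two_eq_zero_or_one (a:ℕ) with ha | ha
  · left; ext; omega
  · right; ext; rw [flip_val]; split_ifs <;> omega
  · right; ext; rw [flip_val]; split_ifs <;> omega
  · left; ext; omega

lemma pos_cases (p : Fin (2*n)) :
    p = P0 ⟨(p:ℕ)/2, by have := p.isLt; omega⟩ ∨ p = P1 ⟨(p:ℕ)/2, by have := p.isLt; omega⟩ := by
  rcases Nat.mod_two_eq_zero_or_one (p:ℕ) with hp | hp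
  · left; ext; simp [P0]; omega
  · right; ext; simp [P1]; omega

end PfSphere
namespace PfSphere
variable {n : ℕ} (z : ℕ → ℂ)

lemma Spn_anti (a b : Fin (2*n)) : Spn n z a b = - Spn n z b a := by
  unfold Spn
  split_ifs <;> first | omega | ring

lemma Spn_cross (a b : Fin (2*n)) (h : (a:ℕ)/2 ≠ (b:ℕ)/2) :
    Spn n z a b = (if (a:ℕ) < (b:ℕ) then 1 else -1) * (wCoord z a * wCoord z b) := by
  have hab : (a:ℕ) ≠ (b:ℕ) := by omega
  unfold Spn wBracket
  split_ifs <;> first | omega | ring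

lemma core (i i' j j' : Fin (2*n)) (hii' : (i:ℕ)/2 = (i':ℕ)/2)
    (hij : (i:ℕ)/2 ≠ (j:ℕ)/2) (hij' : (i:ℕ)/2 ≠ (j':ℕ)/2) :
    Spn n z i j * Spn n z i' j' = Spn n z i j' * Spn n z i' j := by
  rw [Spn_cross z i j hij, Spn_cross z i' j' (by omega), Spn_cross z i j' hij',
    Spn_cross z i' j (by omega)]
  have e1 : ((i':ℕ) < (j:ℕ)) = ((i:ℕ) < (j:ℕ)) := propext (by omega)
  have e2 : ((i':ℕ) < (j':ℕ)) = ((i:ℕ) < (j':ℕ)) := propext (by omega)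
  simp only [e1, e2]
  split_ifs <;> ring

noncomputable def dval (k : ℕ) : ℂ :=
  2 * (1 + ∑ ℓ ∈ Finset.range (k+1), z ℓ * starRingEnd ℂ (z ℓ))

lemma Spn_P0P1 (k : Fin n) : Spn n z (P0 k) (P1 k) = dval z k := by
  unfold Spn
  rw [if_pos (by simp [P0, P1])]
  unfold wBracket
  have h0 : ((P0 k : Fin (2*n)) : ℕ) = 2*(k:ℕ) := rfl
  have h1 : ((P1 k : Fin (2*n)) : ℕ) = 2*(k:ℕ)+1 := rfl
  rw [h0, h1, if_pos (by omega)]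
  unfold dval
  norm_num

noncomputable def FF (n : ℕ) (z : ℕ → ℂ) (σ : Equiv.Perm (Fin (2*n))) : ℂ :=
  ((Equiv.Perm.sign σ : ℤ) : ℂ) * ∏ k : Fin n, Spn n z (σ (P0 k)) (σ (P1 k))

def partner (σ : Equiv.Perm (Fin (2*n))) : Equiv.Perm (Fin (2*n)) :=
  σ * flipPerm n * σ⁻¹

lemma partner_apply (σ : Equiv.Perm (Fin (2*n))) (v : Fin (2*n)) :
    partner σ v = σ (flipPerm n (σ⁻¹ v)) := rfl

lemma partner_apply_sigma (σ : Equiv.Perm (Fin (2*n))) (p : Fin (2*n)) :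
    partner σ (σ p) = σ (flipPerm n p) := by
  rw [partner_apply, perm_inv_apply_self]

end PfSphere
namespace PfSphere
variable {n : ℕ} (z : ℕ → ℂ)

lemma partner_partner (σ : Equiv.Perm (Fin (2*n))) (v : Fin (2*n)) :
    partner σ (partner σ v) = v := by
  rw [partner_apply σ v, partner_apply_sigma, flip_flip, perm_apply_inv_self]

lemma partner_ne (σ : Equiv.Perm (Fin (2*n))) (v : Fin (2*n)) :
    partner σ v ≠ v := by
  rw [partner_apply]
  intro h
  nth_rewrite 2 [← perm_apply_inv_self σ v] at h
  exact flip_ne _ (σ.injective h)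

lemma partner_conj (s σ : Equiv.Perm (Fin (2*n))) :
    partner (s * σ) = s * partner σ * s⁻¹ := by
  unfold partner
  group

def good (σ : Equiv.Perm (Fin (2*n))) : Prop :=
  ∀ v, ((partner σ v : Fin (2*n)) : ℕ)/2 = (v:ℕ)/2

def crossSet (σ : Equiv.Perm (Fin (2*n))) : Finset (Fin (2*n)) :=
  Finset.univ.filter (fun v => ¬ ((partner σ v : Fin (2*n)) : ℕ)/2 = (v:ℕ)/2)

lemma mem_crossSet {σ : Equiv.Perm (Fin (2*n))} {v : Fin (2*n)} :
    v ∈ crossSet σ ↔ ((partner σ v : Fin (2*n)) : ℕ)/2 ≠ (v:ℕ)/2 := by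
  simp [crossSet]

lemma crossSet_nonempty_iff {σ : Equiv.Perm (Fin (2*n))} :
    (crossSet σ).Nonempty ↔ ¬ good σ := by
  unfold crossSet
  rw [Finset.filter_nonempty_iff]
  unfold good
  push_neg
  simp

noncomputable def iM (hn : 0 < n) (σ : Equiv.Perm (Fin (2*n))) : Fin (2*n) :=
  if h : (crossSet σ).Nonempty then (crossSet σ).min' h else ⟨0, by omega⟩

variable (hn : 0 < n)

noncomputable def jP (σ : Equiv.Perm (Fin (2*n))) : Fin (2*n) := partner σ (iM hn σ)
noncomputable def j'P (σ : Equiv.Perm (Fin (2*n))) : Fin (2*n) :=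
  partner σ (flipPerm n (iM hn σ))

noncomputable def J (σ : Equiv.Perm (Fin (2*n))) : Equiv.Perm (Fin (2*n)) :=
  Equiv.swap (jP hn σ) (j'P hn σ) * σ

section facts
variable {σ : Equiv.Perm (Fin (2*n))}

lemma iM_eq (hσ : ¬ good σ) : iM hn σ = (crossSet σ).min' (crossSet_nonempty_iff.mpr hσ) := by
  rw [iM, dif_pos (crossSet_nonempty_iff.mpr hσ)]

lemma iM_mem (hσ : ¬ good σ) : iM hn σ ∈ crossSet σ := by
  rw [iM_eq hn hσ]; exact Finset.min'_mem _ _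

lemma iM_cross (hσ : ¬ good σ) : ((partner σ (iM hn σ) : Fin (2*n)) : ℕ)/2 ≠ ((iM hn σ : Fin (2*n)):ℕ)/2 :=
  mem_crossSet.mp (iM_mem hn hσ)

lemma flip_iM_cross (hσ : ¬ good σ) :
    ((partner σ (flipPerm n (iM hn σ)) : Fin (2*n)) : ℕ)/2 ≠ ((flipPerm n (iM hn σ) : Fin (2*n)):ℕ)/2 := by
  set i := iM hn σ with hi
  set i' := flipPerm n i
  intro h
  rcases block_mem i' (partner σ i') (by rw [h]) with h1 | h1
  · exact partner_ne σ i' h1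
  · -- partner σ i' = flip i' = i, so partner σ i = i'
    have h2 : partner σ i' = i := by
      rw [h1]; exact (flip_flip i)
    have h3 : partner σ i = i' := by
      rw [← h2, partner_partner]
    have := iM_cross hn hσ
    rw [← hi, h3] at this
    exact this (flip_div i)

lemma jP_ne_j'P : jP hn σ ≠ j'P hn σ := by
  unfold jP j'P
  intro h
  exact flip_ne _ ((partner σ).injective h).symm

lemma jP_cross_i (hσ : ¬ good σ) : ((jP hn σ : Fin (2*n)) : ℕ)/2 ≠ ((iM hn σ : Fin (2*n)):ℕ)/2 :=
  iM_cross hn hσ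

lemma j'P_cross_i (hσ : ¬ good σ) : ((j'P hn σ : Fin (2*n)) : ℕ)/2 ≠ ((iM hn σ : Fin (2*n)):ℕ)/2 := by
  have := flip_iM_cross hn hσ
  rw [flip_div] at this
  exact this

lemma partner_jP : partner σ (jP hn σ) = iM hn σ := partner_partner σ _
lemma partner_j'P : partner σ (j'P hn σ) = flipPerm n (iM hn σ) := partner_partner σ _

end facts
end PfSphere
namespace PfSphere
variable {n : ℕ} (z : ℕ → ℂ) (hn : 0 < n)

lemma fin_ne_of_div {a b : Fin (2*n)} (h : (a:ℕ)/2 ≠ (b:ℕ)/2) : a ≠ b :=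
  fun he => h (by rw [he])

lemma partner_J (σ : Equiv.Perm (Fin (2*n))) (v : Fin (2*n)) :
    partner (J hn σ) v
      = Equiv.swap (jP hn σ) (j'P hn σ) (partner σ (Equiv.swap (jP hn σ) (j'P hn σ) v)) := by
  unfold J
  rw [partner_conj]
  simp [Equiv.Perm.mul_apply, Equiv.swap_inv]

section facts
variable {σ : Equiv.Perm (Fin (2*n))} (hσ : ¬ good σ)
include hσ

lemma crossSet_J : crossSet (J hn σ) = crossSet σ := by
  have hii' : ((flipPerm n (iM hn σ) : Fin (2*n)):ℕ)/2 = ((iM hn σ : Fin (2*n)):ℕ)/2 := flip_div _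
  have hji : ((jP hn σ : Fin (2*n)):ℕ)/2 ≠ ((iM hn σ : Fin (2*n)):ℕ)/2 := jP_cross_i hn hσ
  have hj'i : ((j'P hn σ : Fin (2*n)):ℕ)/2 ≠ ((iM hn σ : Fin (2*n)):ℕ)/2 := j'P_cross_i hn hσ
  have hjj' : jP hn σ ≠ j'P hn σ := jP_ne_j'P hn
  have hij : iM hn σ ≠ jP hn σ := (fin_ne_of_div hji).symm
  have hij' : iM hn σ ≠ j'P hn σ := (fin_ne_of_div hj'i).symm
  have hi'j : flipPerm n (iM hn σ) ≠ jP hn σ := (fin_ne_of_div (by rw [hii']; exact hji)).symm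
  have hi'j' : flipPerm n (iM hn σ) ≠ j'P hn σ := (fin_ne_of_div (by rw [hii']; exact hj'i)).symm
  have hpj : partner σ (jP hn σ) = iM hn σ := partner_jP hn
  have hpj' : partner σ (j'P hn σ) = flipPerm n (iM hn σ) := partner_j'P hn
  have hpi : partner σ (iM hn σ) = jP hn σ := rfl
  have hpi' : partner σ (flipPerm n (iM hn σ)) = j'P hn σ := rfl
  ext v
  rw [mem_crossSet, mem_crossSet, partner_J]
  by_cases hv1 : v = iM hn σ
  · subst hv1
    rw [Equiv.swap_apply_of_ne_of_ne hij hij', hpi, Equiv.swap_apply_left]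
    omega
  by_cases hv2 : v = flipPerm n (iM hn σ)
  · subst hv2
    rw [Equiv.swap_apply_of_ne_of_ne hi'j hi'j', hpi', Equiv.swap_apply_right]
    omega
  by_cases hv3 : v = jP hn σ
  · subst hv3
    rw [Equiv.swap_apply_left, hpj', hpj,
      Equiv.swap_apply_of_ne_of_ne hi'j hi'j']
    omega
  by_cases hv4 : v = j'P hn σ
  · subst hv4
    rw [Equiv.swap_apply_right, hpj, hpj',
      Equiv.swap_apply_of_ne_of_ne hij hij']
    omega
  · -- generic case
    have hvj : v ≠ jP hn σ := hv3
    have hvj' : v ≠ j'P hn σ := hv4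
    rw [Equiv.swap_apply_of_ne_of_ne hvj hvj']
    have hp1 : partner σ v ≠ jP hn σ := fun he => by
      have : v = partner σ (jP hn σ) := by rw [← he, partner_partner]
      rw [hpj] at this; exact hv1 this
    have hp2 : partner σ v ≠ j'P hn σ := fun he => by
      have : v = partner σ (j'P hn σ) := by rw [← he, partner_partner]
      rw [hpj'] at this; exact hv2 this
    rw [Equiv.swap_apply_of_ne_of_ne hp1 hp2]

lemma not_good_J : ¬ good (J hn σ) := by
  rw [← crossSet_nonempty_iff, crossSet_J hn hσ]
  exact crossSet_nonempty_iff.mpr hσ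

lemma iM_J : iM hn (J hn σ) = iM hn σ := by
  rw [iM_eq hn (not_good_J hn hσ), iM_eq hn hσ]
  simp only [crossSet_J hn hσ]

lemma jP_J : jP hn (J hn σ) = j'P hn σ := by
  have hji : ((jP hn σ : Fin (2*n)):ℕ)/2 ≠ ((iM hn σ : Fin (2*n)):ℕ)/2 := jP_cross_i hn hσ
  have hj'i : ((j'P hn σ : Fin (2*n)):ℕ)/2 ≠ ((iM hn σ : Fin (2*n)):ℕ)/2 := j'P_cross_i hn hσ
  have hij : iM hn σ ≠ jP hn σ := (fin_ne_of_div hji).symm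
  have hij' : iM hn σ ≠ j'P hn σ := (fin_ne_of_div hj'i).symm
  unfold jP
  rw [partner_J, iM_J hn hσ, Equiv.swap_apply_of_ne_of_ne hij hij']
  rw [show partner σ (iM hn σ) = jP hn σ from rfl, Equiv.swap_apply_left]

lemma j'P_J : j'P hn (J hn σ) = jP hn σ := by
  have hii' : ((flipPerm n (iM hn σ) : Fin (2*n)):ℕ)/2 = ((iM hn σ : Fin (2*n)):ℕ)/2 := flip_div _
  have hji : ((jP hn σ : Fin (2*n)):ℕ)/2 ≠ ((iM hn σ : Fin (2*n)):ℕ)/2 := jP_cross_i hn hσ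
  have hj'i : ((j'P hn σ : Fin (2*n)):ℕ)/2 ≠ ((iM hn σ : Fin (2*n)):ℕ)/2 := j'P_cross_i hn hσ
  have hi'j : flipPerm n (iM hn σ) ≠ jP hn σ := (fin_ne_of_div (by rw [hii']; exact hji)).symm
  have hi'j' : flipPerm n (iM hn σ) ≠ j'P hn σ := (fin_ne_of_div (by rw [hii']; exact hj'i)).symm
  unfold j'P
  rw [partner_J, iM_J hn hσ, Equiv.swap_apply_of_ne_of_ne hi'j hi'j']
  rw [show partner σ (flipPerm n (iM hn σ)) = j'P hn σ from rfl, Equiv.swap_apply_right]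

lemma J_J : J hn (J hn σ) = σ := by
  conv_lhs => rw [J, jP_J hn hσ, j'P_J hn hσ]
  rw [Equiv.swap_comm, J, ← mul_assoc, Equiv.swap_mul_self, one_mul]

lemma J_ne : J hn σ ≠ σ := by
  intro h
  have h2 := congrArg (fun τ : Equiv.Perm (Fin (2*n)) => τ (σ⁻¹ (jP hn σ))) h
  simp only [J, Equiv.Perm.mul_apply, perm_apply_inv_self,
    Equiv.swap_apply_left] at h2
  exact jP_ne_j'P hn h2.symm

end facts
end PfSphere
namespace PfSphere
variable {n : ℕ} (z : ℕ → ℂ) (hn : 0 < n)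

section ffj
variable {σ : Equiv.Perm (Fin (2*n))} (hσ : ¬ good σ)
include hσ

lemma FF_J : FF n z (J hn σ) = - FF n z σ := by
  classical
  set i : Fin (2*n) := iM hn σ with hidef
  set i' : Fin (2*n) := flipPerm n (iM hn σ) with hi'def
  set j : Fin (2*n) := jP hn σ with hjdef
  set j' : Fin (2*n) := j'P hn σ with hj'def
  have hii' : ((i':Fin (2*n)):ℕ)/2 = ((i:Fin (2*n)):ℕ)/2 := flip_div _
  have hji : ((j:Fin (2*n)):ℕ)/2 ≠ ((i:Fin (2*n)):ℕ)/2 := jP_cross_i hn hσ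
  have hj'i : ((j':Fin (2*n)):ℕ)/2 ≠ ((i:Fin (2*n)):ℕ)/2 := j'P_cross_i hn hσ
  have hjj' : j ≠ j' := jP_ne_j'P hn
  have hij : i ≠ j := (fin_ne_of_div hji).symm
  have hij' : i ≠ j' := (fin_ne_of_div hj'i).symm
  have hi'j : i' ≠ j := (fin_ne_of_div (by rw [hii']; exact hji)).symm
  have hi'j' : i' ≠ j' := (fin_ne_of_div (by rw [hii']; exact hj'i)).symm
  set s : Equiv.Perm (Fin (2*n)) := Equiv.swap j j' with hsdef
  set pj : Fin (2*n) := σ⁻¹ j with hpjdef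
  set pj' : Fin (2*n) := σ⁻¹ j' with hpj'def
  have hσpj : σ pj = j := perm_apply_inv_self σ j
  have hσpj' : σ pj' = j' := perm_apply_inv_self σ j'
  have hflipj : σ (flipPerm n pj) = i := by
    rw [← partner_apply_sigma, hσpj, hjdef]
    exact partner_jP hn
  have hflipj' : σ (flipPerm n pj') = i' := by
    rw [← partner_apply_sigma, hσpj', hj'def]
    exact partner_j'P hn
  set k1 : Fin n := ⟨(pj:ℕ)/2, by have := pj.isLt; omega⟩ with hk1def
  set k2 : Fin n := ⟨(pj':ℕ)/2, by have := pj'.isLt; omega⟩ with hk2def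
  have hk12 : k1 ≠ k2 := by
    intro h
    have hdiv : (pj:ℕ)/2 = (pj':ℕ)/2 := congrArg Fin.val h
    rcases block_mem pj pj' hdiv with h1 | h1
    · exact hjj' (by rw [← hσpj, ← hσpj', h1])
    · have : j' = i := by rw [← hσpj', h1, hflipj]
      exact (fin_ne_of_div hj'i) this
  -- the slot values
  have hcase1 : (σ (P0 k1) = j ∧ σ (P1 k1) = i) ∨ (σ (P0 k1) = i ∧ σ (P1 k1) = j) := by
    rcases pos_cases pj with h1 | h1
    · left
      constructor
      · rw [show P0 k1 = pj from h1.symm, hσpj]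
      · rw [show P1 k1 = flipPerm n pj from by rw [h1, flip_P0], hflipj]
    · right
      constructor
      · rw [show P0 k1 = flipPerm n pj from by rw [h1, flip_P1], hflipj]
      · rw [show P1 k1 = pj from h1.symm, hσpj]
  have hcase2 : (σ (P0 k2) = j' ∧ σ (P1 k2) = i') ∨ (σ (P0 k2) = i' ∧ σ (P1 k2) = j') := by
    rcases pos_cases pj' with h1 | h1
    · left
      constructor
      · rw [show P0 k2 = pj' from h1.symm, hσpj']
      · rw [show P1 k2 = flipPerm n pj' from by rw [h1, flip_P0], hflipj']
    · right
      constructor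
      · rw [show P0 k2 = flipPerm n pj' from by rw [h1, flip_P1], hflipj']
      · rw [show P1 k2 = pj' from h1.symm, hσpj']
  -- generic slots unchanged
  have hgen : ∀ k : Fin n, k ≠ k1 → k ≠ k2 →
      s (σ (P0 k)) = σ (P0 k) ∧ s (σ (P1 k)) = σ (P1 k) := by
    intro k hk1 hk2
    have hP0 : ∀ p : Fin (2*n), σ p = j → (p:ℕ)/2 = (k1:ℕ) := by
      intro p hp
      have : p = pj := by rw [hpjdef, ← hp, perm_inv_apply_self]
      rw [this]
    have hP0' : ∀ p : Fin (2*n), σ p = j' → (p:ℕ)/2 = (k2:ℕ) := by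
      intro p hp
      have : p = pj' := by rw [hpj'def, ← hp, perm_inv_apply_self]
      rw [this]
    have d0 : ((P0 k : Fin (2*n)):ℕ)/2 = (k:ℕ) := by
      have : ((P0 k : Fin (2*n)):ℕ) = 2*(k:ℕ) := rfl
      omega
    have d1 : ((P1 k : Fin (2*n)):ℕ)/2 = (k:ℕ) := by
      have : ((P1 k : Fin (2*n)):ℕ) = 2*(k:ℕ)+1 := rfl
      omega
    have hk1v : (k:ℕ) ≠ (k1:ℕ) := fun h => hk1 (Fin.ext h)
    have hk2v : (k:ℕ) ≠ (k2:ℕ) := fun h => hk2 (Fin.ext h)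
    constructor
    · exact Equiv.swap_apply_of_ne_of_ne
        (fun h => hk1v (by rw [← d0, hP0 _ h]))
        (fun h => hk2v (by rw [← d0, hP0' _ h]))
    · exact Equiv.swap_apply_of_ne_of_ne
        (fun h => hk1v (by rw [← d1, hP0 _ h]))
        (fun h => hk2v (by rw [← d1, hP0' _ h]))
  -- swap values on the quadruple
  have hsj : s j = j' := Equiv.swap_apply_left _ _
  have hsj' : s j' = j := Equiv.swap_apply_right _ _
  have hsi : s i = i := Equiv.swap_apply_of_ne_of_ne hij hij'
  have hsi' : s i' = i' := Equiv.swap_apply_of_ne_of_ne hi'j hi'j'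
  -- the core identity
  have hcore := core z i i' j j' hii'.symm hji.symm hj'i.symm
  -- product equality
  have hsplit : ∀ f : Fin n → ℂ,
      (∏ k : Fin n, f k) = (∏ k ∈ Finset.univ \ {k1, k2}, f k) * (f k1 * f k2) := by
    intro f
    rw [← Finset.prod_pair hk12, Finset.prod_sdiff (Finset.subset_univ _)]
  have happ : ∀ k : Fin n, (J hn σ) (P0 k) = s (σ (P0 k)) ∧ (J hn σ) (P1 k) = s (σ (P1 k)) := by
    intro k
    constructor <;> rfl
  have hprod : (∏ k : Fin n, Spn n z ((J hn σ) (P0 k)) ((J hn σ) (P1 k)))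
      = ∏ k : Fin n, Spn n z (σ (P0 k)) (σ (P1 k)) := by
    simp only [fun k => (happ k).1, fun k => (happ k).2]
    rw [hsplit (fun k => Spn n z (s (σ (P0 k))) (s (σ (P1 k)))),
        hsplit (fun k => Spn n z (σ (P0 k)) (σ (P1 k)))]
    congr 1
    · refine Finset.prod_congr rfl fun k hk => ?_
      rw [Finset.mem_sdiff, Finset.mem_insert, Finset.mem_singleton] at hk
      have h1 := hgen k (fun h => hk.2 (Or.inl h)) (fun h => hk.2 (Or.inr h))
      rw [h1.1, h1.2]
    · rcases hcase1 with ⟨e1, e2⟩ | ⟨e1, e2⟩ <;> rcases hcase2 with ⟨f1, f2⟩ | ⟨f1, f2⟩ <;>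
        rw [e1, e2, f1, f2] <;>
        simp only [hsj, hsj', hsi, hsi', Spn_anti z j i, Spn_anti z j i',
          Spn_anti z j' i, Spn_anti z j' i'] <;>
        first | linear_combination -hcore | linear_combination hcore
  have hsign : Equiv.Perm.sign (J hn σ) = - Equiv.Perm.sign σ := by
    rw [show J hn σ = Equiv.swap (jP hn σ) (j'P hn σ) * σ from rfl,
      Equiv.Perm.sign_mul, Equiv.Perm.sign_swap hjj']
    simp
  unfold FF
  rw [hprod, hsign]
  simp only [Units.val_neg, Int.cast_neg, neg_mul]

end ffj
end PfSphere
namespace PfSphere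
variable {n : ℕ} (z : ℕ → ℂ)

instance : DecidablePred (good (n := n)) := fun σ => by
  unfold good; infer_instance

lemma sum_bad (hn : 0 < n) :
    ∑ σ ∈ Finset.univ.filter (fun σ => ¬ good σ), FF n z σ = 0 := by
  refine Finset.sum_involution (fun σ _ => J hn σ) ?_ ?_ ?_ ?_
  · intro σ ha
    rw [Finset.mem_filter] at ha
    rw [FF_J z hn ha.2]
    ring
  · intro σ ha _
    rw [Finset.mem_filter] at ha
    exact J_ne hn ha.2
  · intro σ ha
    rw [Finset.mem_filter] at ha ⊢
    exact ⟨Finset.mem_univ _, not_good_J hn ha.2⟩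
  · intro σ ha
    rw [Finset.mem_filter] at ha
    exact J_J hn ha.2

/-- the pairing equivalence `Fin 2 × Fin m ≃ Fin (2*m)`, `(e,k) ↦ 2k+e`. -/
def e2 (m : ℕ) : Fin 2 × Fin m ≃ Fin (2*m) where
  toFun p := ⟨2*(p.2:ℕ)+(p.1:ℕ), by have := p.1.isLt; have := p.2.isLt; omega⟩
  invFun x := (⟨(x:ℕ)%2, by omega⟩, ⟨(x:ℕ)/2, by have := x.isLt; omega⟩)
  left_inv p := by
    obtain ⟨e, k⟩ := p
    have he := e.isLt
    refine Prod.ext (Fin.ext ?_) (Fin.ext ?_)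
    · show (2*(k:ℕ)+(e:ℕ)) % 2 = (e:ℕ)
      omega
    · show (2*(k:ℕ)+(e:ℕ)) / 2 = (k:ℕ)
      omega
  right_inv x := by
    apply Fin.ext
    show 2*((x:ℕ)/2) + (x:ℕ)%2 = (x:ℕ)
    omega

/-- doubling of a permutation -/
def gD (π : Equiv.Perm (Fin n)) : Equiv.Perm (Fin (2*n)) :=
  (e2 n).permCongr (Equiv.prodCongrRight (fun _ : Fin 2 => π))

lemma gD_P0 (π : Equiv.Perm (Fin n)) (k : Fin n) : gD π (P0 k) = P0 (π k) := by
  have h1 : (e2 n).symm (P0 k) = (⟨0, by omega⟩, k) := by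
    refine Prod.ext (Fin.ext ?_) (Fin.ext ?_)
    · show ((P0 k : Fin (2*n)):ℕ) % 2 = 0
      show (2*(k:ℕ)) % 2 = 0
      omega
    · show ((P0 k : Fin (2*n)):ℕ) / 2 = (k:ℕ)
      show (2*(k:ℕ)) / 2 = (k:ℕ)
      omega
  unfold gD
  rw [Equiv.permCongr_apply, h1]
  rfl

lemma gD_P1 (π : Equiv.Perm (Fin n)) (k : Fin n) : gD π (P1 k) = P1 (π k) := by
  have h1 : (e2 n).symm (P1 k) = (⟨1, by omega⟩, k) := by
    refine Prod.ext (Fin.ext ?_) (Fin.ext ?_)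
    · show (2*(k:ℕ)+1) % 2 = 1
      omega
    · show (2*(k:ℕ)+1) / 2 = (k:ℕ)
      omega
  unfold gD
  rw [Equiv.permCongr_apply, h1]
  rfl

lemma sign_gD (π : Equiv.Perm (Fin n)) : Equiv.Perm.sign (gD π) = 1 := by
  unfold gD
  rw [Equiv.Perm.sign_permCongr, Equiv.Perm.sign_prodCongrRight]
  simp [Int.units_mul_self]

/-- flip the pairs indexed by `s` -/
def tauS (s : Finset (Fin n)) : Equiv.Perm (Fin (2*n)) :=
  Function.Involutive.toPerm
    (fun x => if (x:ℕ)/2 ∈ s.image Fin.val then flipPerm n x else x)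
    (by
      intro x
      by_cases h : (x:ℕ)/2 ∈ s.image Fin.val
      · simp only
        rw [if_pos h, if_pos (by rw [flip_div x]; exact h), flip_flip]
      · simp only
        rw [if_neg h, if_neg h])

lemma tauS_apply (s : Finset (Fin n)) (x : Fin (2*n)) :
    tauS s x = if (x:ℕ)/2 ∈ s.image Fin.val then flipPerm n x else x :=
  rfl

lemma mem_image_val (s : Finset (Fin n)) (k : Fin n) :
    (k:ℕ) ∈ s.image Fin.val ↔ k ∈ s := by
  rw [Finset.mem_image]
  constructor
  · rintro ⟨a, ha, hav⟩
    rwa [← Fin.ext hav]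
  · intro h; exact ⟨k, h, rfl⟩

lemma P0_div (k : Fin n) : ((P0 k : Fin (2*n)):ℕ)/2 = (k:ℕ) := by
  show (2*(k:ℕ))/2 = (k:ℕ); omega

lemma P1_div (k : Fin n) : ((P1 k : Fin (2*n)):ℕ)/2 = (k:ℕ) := by
  show (2*(k:ℕ)+1)/2 = (k:ℕ); omega

lemma tauS_P0 (s : Finset (Fin n)) (k : Fin n) :
    tauS s (P0 k) = if k ∈ s then P1 k else P0 k := by
  rw [tauS_apply, P0_div, flip_P0]
  by_cases h : k ∈ s
  · rw [if_pos ((mem_image_val s k).mpr h), if_pos h]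
  · rw [if_neg (fun hc => h ((mem_image_val s k).mp hc)), if_neg h]

lemma tauS_P1 (s : Finset (Fin n)) (k : Fin n) :
    tauS s (P1 k) = if k ∈ s then P0 k else P1 k := by
  rw [tauS_apply, P1_div, flip_P1]
  by_cases h : k ∈ s
  · rw [if_pos ((mem_image_val s k).mpr h), if_pos h]
  · rw [if_neg (fun hc => h ((mem_image_val s k).mp hc)), if_neg h]

lemma tauS_insert (a : Fin n) (s : Finset (Fin n)) (ha : a ∉ s) :
    tauS (insert a s) = Equiv.swap (P0 a) (P1 a) * tauS s := by
  apply Equiv.ext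
  intro x
  rw [Equiv.Perm.mul_apply, tauS_apply, tauS_apply, Finset.image_insert]
  simp only [Finset.mem_insert]
  by_cases h : (x:ℕ)/2 = (a:ℕ)
  · rw [if_pos (Or.inl h), if_neg (by
      intro hc
      obtain ⟨b, hb, hbv⟩ := Finset.mem_image.mp hc
      have : b = a := Fin.ext (by omega)
      exact ha (this ▸ hb))]
    have hxa : x = P0 a ∨ x = P1 a := by
      rcases pos_cases x with h1 | h1
      · left; rw [h1]; exact congrArg P0 (Fin.ext h)
      · right; rw [h1]; exact congrArg P1 (Fin.ext h)
    rcases hxa with h1 | h1 <;> subst h1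
    · rw [flip_P0, Equiv.swap_apply_left]
    · rw [flip_P1, Equiv.swap_apply_right]
  · have hne0 : ∀ y : Fin (2*n), ((y:ℕ))/2 = (x:ℕ)/2 → Equiv.swap (P0 a) (P1 a) y = y := by
      intro y hy
      have hP0a : ((P0 a : Fin (2*n)):ℕ) = 2*(a:ℕ) := rfl
      have hP1a : ((P1 a : Fin (2*n)):ℕ) = 2*(a:ℕ)+1 := rfl
      refine Equiv.swap_apply_of_ne_of_ne ?_ ?_
      · intro he
        have := congrArg Fin.val he
        rw [hP0a] at this
        omega
      · intro he
        have := congrArg Fin.val he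
        rw [hP1a] at this
        omega
    by_cases h2 : (x:ℕ)/2 ∈ s.image Fin.val
    · rw [if_pos (Or.inr h2), if_pos h2, hne0 _ (flip_div x)]
    · rw [if_neg ?_, if_neg h2, hne0 x rfl]
      rintro (h3 | h3)
      · exact h h3
      · exact h2 h3

lemma tauS_empty : tauS (∅ : Finset (Fin n)) = 1 := by
  ext x
  rw [tauS_apply]
  simp

lemma sign_tauS (s : Finset (Fin n)) :
    Equiv.Perm.sign (tauS s) = (-1) ^ s.card := by
  induction s using Finset.induction_on with
  | empty => simp [tauS_empty]
  | insert a s ha ih =>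
    rw [tauS_insert a s ha, Equiv.Perm.sign_mul, Equiv.Perm.sign_swap (P0_ne_P1 a), ih,
      Finset.card_insert_of_notMem ha, pow_add, pow_one, mul_comm]

end PfSphere
namespace PfSphere
variable {n : ℕ} (z : ℕ → ℂ)

lemma flip_tauS (s : Finset (Fin n)) (x : Fin (2*n)) :
    tauS s (flipPerm n x) = flipPerm n (tauS s x) := by
  rw [tauS_apply, tauS_apply, flip_div]
  by_cases h : (x:ℕ)/2 ∈ s.image Fin.val
  · rw [if_pos h, if_pos h]
  · rw [if_neg h, if_neg h]

lemma flip_gD (π : Equiv.Perm (Fin n)) (x : Fin (2*n)) :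
    gD π (flipPerm n x) = flipPerm n (gD π x) := by
  rcases pos_cases x with h | h <;> rw [h]
  · rw [flip_P0, gD_P1, gD_P0, flip_P0]
  · rw [flip_P1, gD_P0, gD_P1, flip_P1]

lemma flip_gTau (π : Equiv.Perm (Fin n)) (s : Finset (Fin n)) (x : Fin (2*n)) :
    (gD π * tauS s) (flipPerm n x) = flipPerm n ((gD π * tauS s) x) := by
  rw [Equiv.Perm.mul_apply, Equiv.Perm.mul_apply, flip_tauS, flip_gD]

lemma good_gTau (π : Equiv.Perm (Fin n)) (s : Finset (Fin n)) :
    good (gD π * tauS s) := by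
  intro v
  rw [partner_apply, flip_gTau, perm_apply_inv_self]
  exact flip_div v

lemma gTau_P0 (π : Equiv.Perm (Fin n)) (s : Finset (Fin n)) (k : Fin n) :
    (gD π * tauS s) (P0 k) = if k ∈ s then P1 (π k) else P0 (π k) := by
  rw [Equiv.Perm.mul_apply, tauS_P0]
  by_cases h : k ∈ s
  · rw [if_pos h, if_pos h, gD_P1]
  · rw [if_neg h, if_neg h, gD_P0]

lemma gTau_P1 (π : Equiv.Perm (Fin n)) (s : Finset (Fin n)) (k : Fin n) :
    (gD π * tauS s) (P1 k) = if k ∈ s then P0 (π k) else P1 (π k) := by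
  rw [Equiv.Perm.mul_apply, tauS_P1]
  by_cases h : k ∈ s
  · rw [if_pos h, if_pos h, gD_P0]
  · rw [if_neg h, if_neg h, gD_P1]

lemma FF_gTau (π : Equiv.Perm (Fin n)) (s : Finset (Fin n)) :
    FF n z (gD π * tauS s) = ∏ k : Fin n, dval z k := by
  unfold FF
  have hsign : Equiv.Perm.sign (gD π * tauS s) = (-1) ^ s.card := by
    rw [Equiv.Perm.sign_mul, sign_gD, sign_tauS, one_mul]
  have hterm : ∀ k : Fin n,
      Spn n z ((gD π * tauS s) (P0 k)) ((gD π * tauS s) (P1 k))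
        = (if k ∈ s then (-1:ℂ) else 1) * dval z (π k) := by
    intro k
    rw [gTau_P0, gTau_P1]
    by_cases h : k ∈ s
    · rw [if_pos h, if_pos h, if_pos h, Spn_anti, Spn_P0P1]
      ring
    · rw [if_neg h, if_neg h, if_neg h, Spn_P0P1, one_mul]
  rw [Finset.prod_congr rfl (fun k _ => hterm k), Finset.prod_mul_distrib,
    Finset.prod_ite_mem, Finset.prod_const, hsign]
  have hc : ∏ k : Fin n, dval z ((π k : Fin n) : ℕ) = ∏ k : Fin n, dval z ((k : Fin n) : ℕ) :=
    Equiv.prod_comp π (fun k => dval z (k : ℕ))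
  rw [hc]
  have hu : (((((-1 : ℤˣ) ^ s.card) : ℤˣ) : ℤ) : ℂ) = (-1 : ℂ) ^ s.card := by
    push_cast
    rfl
  rw [hu, Finset.univ_inter, ← mul_assoc, ← mul_pow]
  norm_num

lemma sum_good :
    ∑ σ ∈ Finset.univ.filter (fun σ => good σ), FF n z σ
      = (2^n * n.factorial : ℂ) * ∏ k : Fin n, dval z k := by
  classical
  have key : ∑ _p ∈ (Finset.univ : Finset (Equiv.Perm (Fin n) × Finset (Fin n))),
      (∏ k : Fin n, dval z (k:ℕ))
      = ∑ σ ∈ Finset.univ.filter (fun σ => good σ), FF n z σ := by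
    refine Finset.sum_bij (fun p _ => gD p.1 * tauS p.2) ?_ ?_ ?_ ?_
    · intro p _
      rw [Finset.mem_filter]
      exact ⟨Finset.mem_univ _, good_gTau p.1 p.2⟩
    · -- injectivity
      intro p hp q hq h
      obtain ⟨π, s⟩ := p
      obtain ⟨ρ, t⟩ := q
      simp only at h
      have hk : ∀ k : Fin n, π k = ρ k ∧ (k ∈ s ↔ k ∈ t) := by
        intro k
        have h0 := congrArg (fun τ : Equiv.Perm (Fin (2*n)) => τ (P0 k)) h
        simp only [gTau_P0] at h0
        by_cases h1 : k ∈ s <;> by_cases h2 : k ∈ t <;>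
          simp only [h1, h2, if_pos, if_neg, if_true, if_false] at h0 <;>
          [skip; skip; skip; skip]
        · exact ⟨by
            have := congrArg Fin.val h0
            have e1 : ((P1 (π k) : Fin (2*n)):ℕ) = 2*((π k : Fin n):ℕ)+1 := rfl
            have e2 : ((P1 (ρ k) : Fin (2*n)):ℕ) = 2*((ρ k : Fin n):ℕ)+1 := rfl
            rw [e1, e2] at this
            exact Fin.ext (by omega), by simp [h1, h2]⟩
        · exfalso
          have := congrArg Fin.val h0
          have e1 : ((P1 (π k) : Fin (2*n)):ℕ) = 2*((π k : Fin n):ℕ)+1 := rfl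
          have e2 : ((P0 (ρ k) : Fin (2*n)):ℕ) = 2*((ρ k : Fin n):ℕ) := rfl
          rw [e1, e2] at this
          omega
        · exfalso
          have := congrArg Fin.val h0
          have e1 : ((P0 (π k) : Fin (2*n)):ℕ) = 2*((π k : Fin n):ℕ) := rfl
          have e2 : ((P1 (ρ k) : Fin (2*n)):ℕ) = 2*((ρ k : Fin n):ℕ)+1 := rfl
          rw [e1, e2] at this
          omega
        · exact ⟨by
            have := congrArg Fin.val h0
            have e1 : ((P0 (π k) : Fin (2*n)):ℕ) = 2*((π k : Fin n):ℕ) := rfl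
            have e2 : ((P0 (ρ k) : Fin (2*n)):ℕ) = 2*((ρ k : Fin n):ℕ) := rfl
            rw [e1, e2] at this
            exact Fin.ext (by omega), by simp [h1, h2]⟩
      have hπ : π = ρ := Equiv.ext fun k => (hk k).1
      have hs : s = t := Finset.ext fun k => (hk k).2
      rw [hπ, hs]
    · -- surjectivity
      intro σ hσ
      rw [Finset.mem_filter] at hσ
      have hg : good σ := hσ.2
      have hP1 : ∀ k : Fin n, σ (P1 k) = flipPerm n (σ (P0 k)) := by
        intro k
        have h1 : partner σ (σ (P0 k)) = σ (P1 k) := by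
          rw [partner_apply_sigma, flip_P0]
        have h2 : ((σ (P1 k) : Fin (2*n)):ℕ)/2 = ((σ (P0 k) : Fin (2*n)):ℕ)/2 := by
          rw [← h1]; exact hg (σ (P0 k))
        rcases block_mem (σ (P0 k)) (σ (P1 k)) h2.symm with h3 | h3
        · exact absurd (σ.injective h3) (P0_ne_P1 k).symm
        · exact h3
      have hfin : ∀ k : Fin n, ((σ (P0 k) : Fin (2*n)):ℕ)/2 < n := by
        intro k; have := (σ (P0 k)).isLt; omega
      set f : Fin n → Fin n := fun k => ⟨((σ (P0 k) : Fin (2*n)):ℕ)/2, hfin k⟩ with hfdef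
      have hinj : Function.Injective f := by
        intro k k' hkk'
        have hd : ((σ (P0 k) : Fin (2*n)):ℕ)/2 = ((σ (P0 k') : Fin (2*n)):ℕ)/2 :=
          congrArg Fin.val hkk'
        rcases block_mem (σ (P0 k')) (σ (P0 k)) hd.symm with h3 | h3
        · have := σ.injective h3
          have := congrArg Fin.val this
          have e1 : ((P0 k : Fin (2*n)):ℕ) = 2*(k:ℕ) := rfl
          have e2 : ((P0 k' : Fin (2*n)):ℕ) = 2*(k':ℕ) := rfl
          rw [e1, e2] at this
          exact Fin.ext (by omega)
        · rw [← hP1 k'] at h3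
          have := σ.injective h3
          have := congrArg Fin.val this
          have e1 : ((P0 k : Fin (2*n)):ℕ) = 2*(k:ℕ) := rfl
          have e2 : ((P1 k' : Fin (2*n)):ℕ) = 2*(k':ℕ)+1 := rfl
          rw [e1, e2] at this
          omega
      refine ⟨(Equiv.ofBijective f (Finite.injective_iff_bijective.mp hinj),
        Finset.univ.filter (fun k => ((σ (P0 k) : Fin (2*n)):ℕ) % 2 = 1)), Finset.mem_univ _, ?_⟩
      apply Equiv.ext
      intro x
      have hkx := (x.isLt)
      set k : Fin n := ⟨(x:ℕ)/2, by omega⟩ with hkdef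
      have hmem : (k ∈ Finset.univ.filter (fun k => ((σ (P0 k) : Fin (2*n)):ℕ) % 2 = 1))
          ↔ ((σ (P0 k) : Fin (2*n)):ℕ) % 2 = 1 := by
        simp
      have hπk : (Equiv.ofBijective f (Finite.injective_iff_bijective.mp hinj)) k = f k := rfl
      have hflipval : ((flipPerm n (σ (P0 k)) : Fin (2*n)):ℕ)
          = if ((σ (P0 k) : Fin (2*n)):ℕ) % 2 = 0 then ((σ (P0 k) : Fin (2*n)):ℕ)+1
            else ((σ (P0 k) : Fin (2*n)):ℕ)-1 := flip_val _
      have hxk : x = P0 k ∨ x = P1 k := pos_cases x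
      rcases hxk with h | h <;> rw [h]
      · rw [gTau_P0]
        by_cases hpar : ((σ (P0 k) : Fin (2*n)):ℕ) % 2 = 1
        · rw [if_pos (hmem.mpr hpar), hπk]
          apply Fin.ext
          have e1 : ((P1 (f k) : Fin (2*n)):ℕ) = 2*(((σ (P0 k) : Fin (2*n)):ℕ)/2)+1 := rfl
          rw [e1]
          omega
        · rw [if_neg (fun hc => hpar (hmem.mp hc)), hπk]
          apply Fin.ext
          have e1 : ((P0 (f k) : Fin (2*n)):ℕ) = 2*(((σ (P0 k) : Fin (2*n)):ℕ)/2) := rfl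
          rw [e1]
          omega
      · rw [gTau_P1, hP1 k]
        by_cases hpar : ((σ (P0 k) : Fin (2*n)):ℕ) % 2 = 1
        · rw [if_pos (hmem.mpr hpar), hπk]
          apply Fin.ext
          rw [hflipval]
          have e1 : ((P0 (f k) : Fin (2*n)):ℕ) = 2*(((σ (P0 k) : Fin (2*n)):ℕ)/2) := rfl
          rw [e1]
          split_ifs <;> omega
        · rw [if_neg (fun hc => hpar (hmem.mp hc)), hπk]
          apply Fin.ext
          rw [hflipval]
          have e1 : ((P1 (f k) : Fin (2*n)):ℕ) = 2*(((σ (P0 k) : Fin (2*n)):ℕ)/2)+1 := rfl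
          rw [e1]
          split_ifs <;> omega
    · intro p _
      exact (FF_gTau z p.1 p.2).symm


  rw [← key, Finset.sum_const, Finset.card_univ, Fintype.card_prod, Fintype.card_perm,
    Fintype.card_finset, Fintype.card_fin, nsmul_eq_mul]
  push_cast
  ring

end PfSphere

namespace PfSphere

lemma pfaffian_eq_FF (m : ℕ) (z : ℕ → ℂ) :
    pfaffian m (Spn m z)
      = ((2:ℂ)^m * (m.factorial : ℂ))⁻¹ * ∑ σ : Equiv.Perm (Fin (2*m)), FF m z σ := rfl

lemma pf_formula (m : ℕ) (z : ℕ → ℂ) :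
    pfaffian m (Spn m z) = ∏ k : Fin m, dval z (k:ℕ) := by
  rcases Nat.eq_zero_or_pos m with hm | hm
  · subst hm
    have h1 : ∀ σ : Equiv.Perm (Fin (2*0)), FF 0 z σ = 1 := by
      intro σ
      have hσ1 : σ = 1 := Equiv.ext fun x => absurd x.2 (by omega)
      subst hσ1
      unfold FF
      rw [Equiv.Perm.sign_one]
      simp
    rw [pfaffian_eq_FF, Finset.sum_congr rfl (fun σ _ => h1 σ), Finset.sum_const,
      Finset.card_univ, Fintype.card_perm, Fintype.card_fin]
    norm_num
  · rw [pfaffian_eq_FF,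
      ← Finset.sum_filter_add_sum_filter_not Finset.univ good (FF m z),
      sum_bad z hm, add_zero, sum_good z, inv_mul_cancel_left₀]
    exact mul_ne_zero (pow_ne_zero _ two_ne_zero) (Nat.cast_ne_zero.mpr m.factorial_ne_zero)

end PfSphere


/-- the Pfaffian recursion
`Pf(S^{(n)}) = 2 Pf(S^{(n-1)}) (1 + ∑_{ℓ≤n} |z_ℓ|²)`, the closed formula
`Pf(S^{(n)}) = 2^n ∏_{k=1}^n (1 + ∑_{ℓ≤k} |z_ℓ|²)`, and nonvanishing. -/
theorem pfaffian_recursion_standard_sphere (n : ℕ) (hn : 1 ≤ n) (z : ℕ → ℂ) :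
    pfaffian n (Spn n z)
        = 2 * pfaffian (n - 1) (Spn (n - 1) z) *
            (1 + ∑ ℓ ∈ Finset.range n, z ℓ * starRingEnd ℂ (z ℓ)) ∧
    pfaffian n (Spn n z)
        = 2 ^ n * ∏ k ∈ Finset.range n,
            (1 + ∑ ℓ ∈ Finset.range (k + 1), z ℓ * starRingEnd ℂ (z ℓ)) ∧
    pfaffian n (Spn n z) ≠ 0 := by
  have key : ∀ m : ℕ, pfaffian m (Spn m z)
      = 2^m * ∏ k ∈ Finset.range m,
          (1 + ∑ ℓ ∈ Finset.range (k+1), z ℓ * starRingEnd ℂ (z ℓ)) := by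
    intro m
    rw [PfSphere.pf_formula,
      Fin.prod_univ_eq_prod_range (fun k => PfSphere.dval z k) m]
    unfold PfSphere.dval
    rw [Finset.prod_mul_distrib, Finset.prod_const, Finset.card_range]
  have hfac : ∀ k : ℕ,
      (1 + ∑ ℓ ∈ Finset.range (k+1), z ℓ * starRingEnd ℂ (z ℓ)) ≠ 0 := by
    intro k
    have hre : (1 + ∑ ℓ ∈ Finset.range (k+1), z ℓ * starRingEnd ℂ (z ℓ))
        = ((1 + ∑ ℓ ∈ Finset.range (k+1), Complex.normSq (z ℓ) : ℝ) : ℂ) := by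
      push_cast
      congr 1
      refine Finset.sum_congr rfl fun ℓ _ => ?_
      rw [Complex.mul_conj]
    rw [hre, Complex.ofReal_ne_zero]
    have hs : 0 ≤ ∑ ℓ ∈ Finset.range (k+1), Complex.normSq (z ℓ) :=
      Finset.sum_nonneg fun ℓ _ => Complex.normSq_nonneg _
    exact ne_of_gt (by linarith)
  have h1 : n - 1 + 1 = n := by omega
  refine ⟨?_, key n, ?_⟩
  · rw [key n, key (n-1)]
    have h2 : ∏ k ∈ Finset.range n,
          (1 + ∑ ℓ ∈ Finset.range (k+1), z ℓ * starRingEnd ℂ (z ℓ))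
        = (∏ k ∈ Finset.range (n-1),
            (1 + ∑ ℓ ∈ Finset.range (k+1), z ℓ * starRingEnd ℂ (z ℓ)))
          * (1 + ∑ ℓ ∈ Finset.range n, z ℓ * starRingEnd ℂ (z ℓ)) := by
      conv_lhs => rw [← h1]
      rw [Finset.prod_range_succ, h1]
    have h3 : (2:ℂ)^n = 2^(n-1) * 2 := by
      rw [← pow_succ, h1]
    rw [h2, h3]
    ring
  · rw [key n]
    exact mul_ne_zero (pow_ne_zero _ two_ne_zero)
      (Finset.prod_ne_zero_iff.mpr fun k _ => hfac k)
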